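/- arXiv:2512.23687 — 11 statements merged into one kernel-verified Lean document; each statement's English description precedes it below -/
import Mathlib

section
/- Let G be a simple graph on a finite vertex type with a bipartition (A, B), and let S be a set of vertices such that G ⊕ S is co-bipartite. If S ∩ A is nonempty, then |A \ S| ≤ 1. -/
open SimpleGraph

/-- Subgraph complementation: `G ⊕ S` toggles all adjacencies inside `S`. -/
def scomp {V : Type*} (G : SimpleGraph V) (S : Set V) : SimpleGraph V where
  Adj u v := u ≠ v ∧ (((u ∈ S ∧ v ∈ S) ∧ ¬ G.Adj u v) ∨ (¬(u ∈ S ∧ v ∈ S) ∧ G.Adj u v))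
  symm := by
    constructor
    intro u v h
    obtain ⟨hne, h⟩ := h
    refine ⟨hne.symm, ?_⟩
    rcases h with ⟨⟨hu, hv⟩, hnadj⟩ | ⟨hns, hadj⟩
    · exact Or.inl ⟨⟨hv, hu⟩, fun h => hnadj h.symm⟩
    · exact Or.inr ⟨fun h' => hns ⟨h'.2, h'.1⟩, hadj.symm⟩
  loopless := by constructor; intro u h; exact h.1 rfl

/-- `s` is an independent set of `G`. -/
def IsIndep {V : Type*} (G : SimpleGraph V) (s : Set V) : Prop :=
  ∀ ⦃u⦄, u ∈ s → ∀ ⦃v⦄, v ∈ s → ¬ G.Adj u v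

theorem stmt1 {V : Type*} [Fintype V] (G : SimpleGraph V) (A B : Set V)
    (hpart : A ∪ B = Set.univ) (hdisj : Disjoint A B)
    (hA : IsIndep G A) (hB : IsIndep G B)
    (S : Set V)
    (hco : ∃ K₁ K₂ : Set V, K₁ ∪ K₂ = Set.univ ∧
      (scomp G S).IsClique K₁ ∧ (scomp G S).IsClique K₂)
    (hSA : (S ∩ A).Nonempty) :
    (A \ S).ncard ≤ 1 := by
  obtain ⟨a, haS, haA⟩ := hSA
  obtain ⟨K₁, K₂, hunion, h1, h2⟩ := hco
  have hsub : (A \ S).Subsingleton := by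
    intro u hu v hv
    by_contra hne
    -- nonadjacency in scomp between vertices of A not both in S
    have hnadj : ∀ x ∈ A, ∀ y ∈ A, ¬ (x ∈ S ∧ y ∈ S) → ¬ (scomp G S).Adj x y := by
      intro x hx y hy hns hadj
      rcases hadj.2 with ⟨hs, _⟩ | ⟨_, hadj'⟩
      · exact hns hs
      · exact hA hx hy hadj'
    have hau : ¬ (scomp G S).Adj a u := hnadj a haA u hu.1 (fun h => hu.2 h.2)
    have hav : ¬ (scomp G S).Adj a v := hnadj a haA v hv.1 (fun h => hv.2 h.2)
    have huv : ¬ (scomp G S).Adj u v := hnadj u hu.1 v hv.1 (fun h => hu.2 h.1)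
    have haneu : a ≠ u := fun h => hu.2 (h ▸ haS)
    have hanev : a ≠ v := fun h => hv.2 (h ▸ haS)
    have ha12 : a ∈ K₁ ∪ K₂ := hunion ▸ Set.mem_univ a
    have hu12 : u ∈ K₁ ∪ K₂ := hunion ▸ Set.mem_univ u
    have hv12 : v ∈ K₁ ∪ K₂ := hunion ▸ Set.mem_univ v
    rcases ha12 with haK | haK
    · have huK : u ∈ K₂ := hu12.resolve_left (fun h => hau (h1 haK h haneu))
      have hvK : v ∈ K₂ := hv12.resolve_left (fun h => hav (h1 haK h hanev))
      exact huv (h2 huK hvK hne)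
    · have huK : u ∈ K₁ := hu12.resolve_right (fun h => hau (h2 haK h haneu))
      have hvK : v ∈ K₁ := hv12.resolve_right (fun h => hav (h2 haK h hanev))
      exact huv (h1 huK hvK hne)
  exact (Set.ncard_le_one_iff (Set.toFinite _)).mpr fun ha hb => hsub ha hb
end

section
/- Let G be a simple graph on a finite vertex type whose vertex set is partitioned into a clique K and an independent set I, and let S be a set of vertices such that G ⊕ S is bipartite. If S ∩ K is nonempty, then |K \ S| ≤ 1. -/
open SimpleGraph

theorem stmt3 {V : Type*} [Fintype V] (G : SimpleGraph V) (K I : Set V)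
    (hpart : K ∪ I = Set.univ) (hdisj : Disjoint K I)
    (hK : G.IsClique K) (hI : IsIndep G I)
    (S : Set V)
    (hbip : ∃ X Y : Set V, X ∪ Y = Set.univ ∧ Disjoint X Y ∧
      IsIndep (scomp G S) X ∧ IsIndep (scomp G S) Y)
    (hSK : (S ∩ K).Nonempty) :
    (K \ S).ncard ≤ 1 := by
  obtain ⟨X, Y, hXY, hdXY, hX, hY⟩ := hbip
  obtain ⟨s, hsS, hsK⟩ := hSK
  rw [Set.ncard_le_one_iff (Set.toFinite _)]
  rintro a b ⟨haK, haS⟩ ⟨hbK, hbS⟩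
  by_contra hab
  -- scomp adjacency helper: a vertex in K \ S and another in K with not both in S
  have adj : ∀ u v : V, u ∈ K → v ∈ K → u ≠ v → ¬(u ∈ S ∧ v ∈ S) → (scomp G S).Adj u v :=
    fun u v hu hv hne hns => ⟨hne, Or.inr ⟨hns, hK hu hv hne⟩⟩
  have hab' : (scomp G S).Adj a b := adj a b haK hbK hab (fun h => haS h.1)
  have hsa : (scomp G S).Adj s a := adj s a hsK haK (fun h => haS (h ▸ hsS)) (fun h => haS h.2)
  have hsb : (scomp G S).Adj s b := adj s b hsK hbK (fun h => hbS (h ▸ hsS)) (fun h => hbS h.2)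
  have mem : ∀ v : V, v ∈ X ∨ v ∈ Y := fun v => by
    have : v ∈ X ∪ Y := hXY ▸ Set.mem_univ v
    exact this
  rcases mem s with hs | hs <;> rcases mem a with ha | ha <;> rcases mem b with hb | hb
  · exact hX hs ha hsa
  · exact hX hs ha hsa
  · exact hX hs hb hsb
  · exact hY ha hb hab'
  · exact hX ha hb hab'
  · exact hY hs hb hsb
  · exact hY hs ha hsa
  · exact hY hs ha hsa
end

section
/- Let G be a simple graph on a finite vertex type whose vertex set is partitioned into a clique K and an independent set I, and let S be a set of vertices such that G ⊕ S is bipartite. Then |S ∩ I| ≤ 2. -/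
open SimpleGraph

theorem stmt4 {V : Type*} [Fintype V] (G : SimpleGraph V) (K I : Set V)
    (hpart : K ∪ I = Set.univ) (hdisj : Disjoint K I)
    (hK : G.IsClique K) (hI : IsIndep G I)
    (S : Set V)
    (hbip : ∃ X Y : Set V, X ∪ Y = Set.univ ∧ Disjoint X Y ∧
      IsIndep (scomp G S) X ∧ IsIndep (scomp G S) Y) :
    (S ∩ I).ncard ≤ 2 := by
  by_contra h
  push_neg at h
  obtain ⟨a, ha, b, hb, c, hc, hab, hac, hbc⟩ := (Set.two_lt_ncard (S ∩ I).toFinite).mp h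
  obtain ⟨X, Y, hXY, hdXY, hX, hY⟩ := hbip
  have adj : ∀ u ∈ S ∩ I, ∀ v ∈ S ∩ I, u ≠ v → (scomp G S).Adj u v := by
    intro u hu v hv huv
    exact ⟨huv, Or.inl ⟨⟨hu.1, hv.1⟩, hI hu.2 hv.2⟩⟩
  have mem : ∀ v : V, v ∈ X ∨ v ∈ Y := by
    intro v
    have : v ∈ X ∪ Y := hXY ▸ Set.mem_univ v
    exact this
  rcases mem a with hA | hA <;> rcases mem b with hB | hB <;> rcases mem c with hC | hC
  · exact hX hA hB (adj a ha b hb hab)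
  · exact hX hA hB (adj a ha b hb hab)
  · exact hX hA hC (adj a ha c hc hac)
  · exact hY hB hC (adj b hb c hc hbc)
  · exact hX hB hC (adj b hb c hc hbc)
  · exact hY hA hC (adj a ha c hc hac)
  · exact hY hA hB (adj a ha b hb hab)
  · exact hY hA hB (adj a ha b hb hab)
end

section
/- Let G be a simple graph on a finite vertex type with a bipartition (A, B). Let Q be a clique of G with |Q| ≤ 2, and let X and Y be sets partitioning V \ Q such that X and Y are both independent sets in G. If every vertex of G adjacent to a vertex of Q lies in X, then G ⊕ (X ∪ Q) is a split graph: in G ⊕ (X ∪ Q), the set X is a clique and the set V \ X is an independent set. -/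
open SimpleGraph

theorem stmt6 {V : Type*} [Fintype V] (G : SimpleGraph V) (A B : Set V)
    (hpart : A ∪ B = Set.univ) (hdisj : Disjoint A B)
    (hA : IsIndep G A) (hB : IsIndep G B)
    (Q X Y : Set V)
    (hQ : G.IsClique Q) (hQcard : Q.ncard ≤ 2)
    (hXY : X ∪ Y = Set.univ \ Q) (hXYdisj : Disjoint X Y)
    (hX : IsIndep G X) (hY : IsIndep G Y)
    (hN : ∀ q ∈ Q, ∀ v : V, G.Adj q v → v ∈ X) :
    (scomp G (X ∪ Q)).IsClique X ∧ IsIndep (scomp G (X ∪ Q)) (Set.univ \ X) := by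
  have hmemY : ∀ v : V, v ∉ X → v ∉ Q → v ∈ Y := by
    intro v hvX hvQ
    have : v ∈ X ∪ Y := by rw [hXY]; exact ⟨Set.mem_univ v, hvQ⟩
    rcases this with h | h
    · exact absurd h hvX
    · exact h
  constructor
  · intro u hu v hv hne
    exact ⟨hne, Or.inl ⟨⟨Or.inl hu, Or.inl hv⟩, hX hu hv⟩⟩
  · rintro u ⟨-, huX⟩ v ⟨-, hvX⟩ ⟨hne, hadj⟩
    by_cases huQ : u ∈ Q <;> by_cases hvQ : v ∈ Q
    · rcases hadj with ⟨-, hnadj⟩ | ⟨hns, -⟩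
      · exact hnadj (hQ huQ hvQ hne)
      · exact hns ⟨Or.inr huQ, Or.inr hvQ⟩
    · rcases hadj with ⟨⟨-, hvS⟩, -⟩ | ⟨-, hadj⟩
      · rcases hvS with h | h
        · exact hvX h
        · exact hvQ h
      · exact hvX (hN u huQ v hadj)
    · rcases hadj with ⟨⟨huS, -⟩, -⟩ | ⟨-, hadj⟩
      · rcases huS with h | h
        · exact huX h
        · exact huQ h
      · exact huX (hN v hvQ u hadj.symm)
    · rcases hadj with ⟨⟨huS, -⟩, -⟩ | ⟨-, hadj⟩
      · rcases huS with h | h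
        · exact huX h
        · exact huQ h
      · exact hY (hmemY u huX huQ) (hmemY v hvX hvQ) hadj
end

section
/- Let G be a 2-connected bipartite simple graph on a finite vertex type with bipartition (A, B), and let S be a set of vertices such that the subgraph of G induced on S is not a complete bipartite graph. Then G ⊕ S is chordal if and only if both of the following hold: (i) S is a vertex cover of G, and (ii) the subgraph of G induced on S contains no induced 2K₂. -/
open SimpleGraph

/-- A cycle `C` has a chord in `G`. -/
def HasChord {V : Type*} (G : SimpleGraph V) {a : V} (C : G.Walk a a) : Prop :=
  ∃ x y : V, x ∈ C.support ∧ y ∈ C.support ∧ G.Adj x y ∧ s(x, y) ∉ C.edges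

/-- `G` is chordal: every cycle of length at least 4 has a chord. -/
def Chordal {V : Type*} (G : SimpleGraph V) : Prop :=
  ∀ (a : V) (C : G.Walk a a), C.IsCycle → 4 ≤ C.length → HasChord G C

section ScompHelpers

variable {V : Type*} {G : SimpleGraph V} {S : Set V} {a b : V}

lemma scomp_adj_inS (ha : a ∈ S) (hb : b ∈ S) (hne : a ≠ b) (h : ¬G.Adj a b) :
    (scomp G S).Adj a b := ⟨hne, Or.inl ⟨⟨ha, hb⟩, h⟩⟩

lemma scomp_adj_out (hn : ¬(a ∈ S ∧ b ∈ S)) (h : G.Adj a b) :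
    (scomp G S).Adj a b := ⟨h.ne, Or.inr ⟨hn, h⟩⟩

lemma adj_of_scomp_out (h : (scomp G S).Adj a b) (hn : ¬(a ∈ S ∧ b ∈ S)) : G.Adj a b := by
  rcases h.2 with ⟨hs, _⟩ | ⟨_, hg⟩
  · exact absurd hs hn
  · exact hg

lemma not_adj_of_scomp_inS (h : (scomp G S).Adj a b) (ha : a ∈ S) (hb : b ∈ S) :
    ¬G.Adj a b := by
  rcases h.2 with ⟨_, hg⟩ | ⟨hn, _⟩
  · exact hg
  · exact absurd ⟨ha, hb⟩ hn

lemma adj_of_not_scomp_inS (hne : a ≠ b) (ha : a ∈ S) (hb : b ∈ S)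
    (h : ¬(scomp G S).Adj a b) : G.Adj a b := by
  by_contra hg
  exact h (scomp_adj_inS ha hb hne hg)

end ScompHelpers

section Helpers


open SimpleGraph Walk

variable {V : Type*} {G : SimpleGraph V}

lemma walk_prop (P : V → Prop) {x y : V} (w : G.Walk x y)
    (hstep : ∀ ⦃a b : V⦄, G.Adj a b → P a → P b) (hx : P x) : P y := by
  induction w with
  | nil => exact hx
  | cons h p ih => exact ih (hstep h hx)

lemma isPath_loop_eq_nil {v : V} (p : G.Walk v v) (hp : p.IsPath) : p = Walk.nil := by
  have h : (⟨p, hp⟩ : G.Path v v) = SimpleGraph.Path.nil := SimpleGraph.Path.loop_eq _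
  exact congrArg Subtype.val h

lemma path_first_edge {x y z : V} (p : G.Walk x y) (hp : p.IsPath)
    (he : s(x, z) ∈ p.edges) : ∃ (h : G.Adj x z) (q : G.Walk z y), p = Walk.cons h q := by
  cases p with
  | nil => simp at he
  | @cons _ d _ h q =>
    rw [Walk.edges_cons, List.mem_cons] at he
    rcases he with he | he
    · obtain rfl : z = d := Sym2.congr_right.mp he
      exact ⟨h, q, rfl⟩
    · exact absurd (q.fst_mem_support_of_mem_edges he)
        ((Walk.cons_isPath_iff h q).mp hp).2

lemma end_mem_tail_support {x y : V} (p : G.Walk x y) (hl : 0 < p.length) :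
    y ∈ p.support.tail := by
  cases p with
  | nil => simp at hl
  | cons h q => simpa using q.end_mem_support

lemma mem_support_iff_tail {a : V} (C : G.Walk a a) (hl : 0 < C.length) (x : V) :
    x ∈ C.support ↔ x ∈ C.support.tail := by
  constructor
  · intro hx
    rw [C.support_eq_cons, List.mem_cons] at hx
    rcases hx with rfl | hx
    · exact end_mem_tail_support C hl
    · exact hx
  · intro hx
    rw [C.support_eq_cons, List.mem_cons]
    exact Or.inr hx

lemma length_rotate' [DecidableEq V] {a w : V} (C : G.Walk a a) (hw : w ∈ C.support) :
    (C.rotate w hw).length = C.length := by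
  have h := (C.rotate_edges w hw).perm.length_eq
  rwa [Walk.length_edges, Walk.length_edges] at h

lemma mem_support_rotate_iff [DecidableEq V] {a w : V} (C : G.Walk a a) (hl : 0 < C.length)
    (hw : w ∈ C.support) (x : V) : x ∈ (C.rotate w hw).support ↔ x ∈ C.support := by
  rw [mem_support_iff_tail _ (by rwa [length_rotate']), mem_support_iff_tail _ hl]
  exact (C.support_rotate w hw).mem_iff

lemma mem_edges_rotate_iff [DecidableEq V] {a w : V} (C : G.Walk a a) (hw : w ∈ C.support) (e : Sym2 V) :
    e ∈ (C.rotate w hw).edges ↔ e ∈ C.edges :=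
  (C.rotate_edges w hw).mem_iff

lemma getVert_consec_mem_edges {a b : V} (p : G.Walk a b) :
    ∀ i : ℕ, i < p.length → s(p.getVert i, p.getVert (i + 1)) ∈ p.edges := by
  induction p with
  | nil => intro i hi; simp at hi
  | @cons u c v h q ih =>
    intro i hi
    cases i with
    | zero =>
      simp [Walk.getVert_zero, Walk.getVert_cons_succ]
    | succ n =>
      rw [Walk.length_cons, Nat.succ_lt_succ_iff] at hi
      rw [Walk.getVert_cons_succ, Walk.getVert_cons_succ, Walk.edges_cons]
      exact List.mem_cons_of_mem _ (ih n hi)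

lemma cycle_nbrs {w : V} (C : G.Walk w w) (hC : C.IsCycle) (hlen : 4 ≤ C.length) :
    ∃ b c : V, G.Adj w b ∧ G.Adj w c ∧ b ∈ C.support ∧ c ∈ C.support ∧ b ≠ c ∧
      s(w, b) ∈ C.edges ∧ s(w, c) ∈ C.edges ∧
      (∀ z, s(w, z) ∈ C.edges → z = b ∨ z = c) ∧ s(b, c) ∉ C.edges := by
  cases C with
  | nil => simp at hlen
  | @cons _ b _ h t =>
    have hct := (Walk.cons_isCycle_iff t h).mp hC
    have hwb : w ≠ b := h.ne
    obtain ⟨c, hc, r, hr⟩ := Walk.exists_eq_cons_of_ne hwb t.reverse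
    have hwc : s(w, c) ∈ t.edges := by
      have : s(w, c) ∈ t.reverse.edges := by rw [hr]; simp
      rwa [Walk.edges_reverse, List.mem_reverse] at this
    have hbne : b ≠ c := by
      rintro rfl
      exact hct.2 hwc
    have honly : ∀ z, s(w, z) ∈ (Walk.cons h t).edges → z = b ∨ z = c := by
      intro z hz
      rw [Walk.edges_cons, List.mem_cons] at hz
      rcases hz with hz | hz
      · exact Or.inl (Sym2.congr_right.mp hz)
      · right
        have hz' : s(w, z) ∈ t.reverse.edges := by
          rwa [Walk.edges_reverse, List.mem_reverse]
        obtain ⟨h', q, hq⟩ := path_first_edge t.reverse hct.1.reverse hz'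
        have := congrArg (fun p => p.getVert 1) (hq.symm.trans hr)
        simpa [Walk.getVert_cons_succ, Walk.getVert_zero] using this
    refine ⟨b, c, h, hc, ?_, ?_, hbne, by simp, ?_, honly, ?_⟩
    · simp [Walk.support_cons, t.start_mem_support]
    · have : c ∈ t.reverse.support := by rw [hr]; simp [Walk.support_cons, r.start_mem_support]
      rw [Walk.support_reverse, List.mem_reverse] at this
      simp [Walk.support_cons, this]
    · rw [Walk.edges_cons]
      exact List.mem_cons_of_mem _ hwc
    · intro hbc
      rw [Walk.edges_cons, List.mem_cons] at hbc
      rcases hbc with hbc | hbc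
      · rcases Sym2.eq_iff.mp hbc with ⟨rfl, _⟩ | ⟨_, rfl⟩
        · exact hwb rfl
        · exact hc.ne rfl
      · obtain ⟨h2, q2, hq2⟩ := path_first_edge t hct.1 hbc
        have hq2path : q2.IsPath ∧ b ∉ q2.support := by
          have := hct.1
          rw [hq2, Walk.cons_isPath_iff] at this
          exact this
        have hwc' : s(w, c) ∈ q2.edges := by
          rw [hq2, Walk.edges_cons, List.mem_cons] at hwc
          rcases hwc with hwc | hwc
          · rcases Sym2.eq_iff.mp hwc with ⟨rfl, _⟩ | ⟨hwc2, _⟩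
            · exact absurd rfl hwb
            · exact absurd hwc2 hc.ne
          · exact hwc
        have hwc'' : s(w, c) ∈ q2.reverse.edges := by
          rwa [Walk.edges_reverse, List.mem_reverse]
        obtain ⟨h3, r3, hr3⟩ := path_first_edge q2.reverse hq2path.1.reverse hwc''
        have hr3nil : r3 = Walk.nil := by
          apply isPath_loop_eq_nil
          have := hq2path.1.reverse
          rw [hr3, Walk.cons_isPath_iff] at this
          exact this.1
        have hq2len : q2.length = 1 := by
          have := congrArg Walk.length hr3
          rw [Walk.length_reverse, Walk.length_cons, hr3nil] at this
          simpa using this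
        have htlen : t.length = 2 := by
          rw [hq2, Walk.length_cons, hq2len]
        rw [Walk.length_cons, htlen] at hlen
        omega

lemma cycle_nbrs_at [DecidableEq V] {a : V} (C : G.Walk a a) (hC : C.IsCycle) (hlen : 4 ≤ C.length)
    {w : V} (hw : w ∈ C.support) :
    ∃ b c : V, G.Adj w b ∧ G.Adj w c ∧ b ∈ C.support ∧ c ∈ C.support ∧ b ≠ c ∧
      s(w, b) ∈ C.edges ∧ s(w, c) ∈ C.edges ∧
      (∀ z, s(w, z) ∈ C.edges → z = b ∨ z = c) ∧ s(b, c) ∉ C.edges := by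
  have hl : 0 < C.length := by omega
  have hlen' : 4 ≤ (C.rotate w hw).length := by rwa [length_rotate']
  obtain ⟨b, c, h1, h2, h3, h4, h5, h6, h7, h8, h9⟩ :=
    cycle_nbrs (C.rotate w hw) (hC.rotate hw) hlen'
  refine ⟨b, c, h1, h2, ?_, ?_, h5, ?_, ?_, ?_, ?_⟩
  · rwa [mem_support_rotate_iff C hl hw] at h3
  · rwa [mem_support_rotate_iff C hl hw] at h4
  · rwa [mem_edges_rotate_iff] at h6
  · rwa [mem_edges_rotate_iff] at h7
  · intro z hz
    exact h8 z ((mem_edges_rotate_iff C hw _).mpr hz)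
  · rwa [mem_edges_rotate_iff] at h9

end Helpers


section Backward

open SimpleGraph Walk

variable {V : Type*}

theorem backward (G : SimpleGraph V) (A B : Set V)
    (hpart : A ∪ B = Set.univ) (hdisj : Disjoint A B)
    (hA : IsIndep G A) (hB : IsIndep G B) (S : Set V)
    (hvc : ∀ u v : V, G.Adj u v → u ∈ S ∨ v ∈ S)
    (h2k2 : ¬ ∃ a b c d : V, a ∈ S ∧ b ∈ S ∧ c ∈ S ∧ d ∈ S ∧
      a ≠ b ∧ a ≠ c ∧ a ≠ d ∧ b ≠ c ∧ b ≠ d ∧ c ≠ d ∧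
      G.Adj a b ∧ G.Adj c d ∧
      ¬ G.Adj a c ∧ ¬ G.Adj a d ∧ ¬ G.Adj b c ∧ ¬ G.Adj b d) :
    Chordal (scomp G S) := by
  classical
  intro a C hC hlen
  have part_of : ∀ z : V, z ∈ A ∨ z ∈ B := fun z => by
    have : z ∈ A ∪ B := hpart ▸ Set.mem_univ z
    exact this
  have hABne : ∀ {p q : V}, p ∈ A → q ∈ B → p ≠ q := fun hp hq h =>
    Set.disjoint_left.mp hdisj hp (h ▸ hq)
  by_cases hout : ∃ w ∈ C.support, w ∉ S
  · -- some vertex outside S : its two cycle neighbours give a chord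
    obtain ⟨w, hw, hwS⟩ := hout
    have case1 : ∀ (P Q : Set V), (∀ z : V, z ∈ P ∨ z ∈ Q) → IsIndep G P → IsIndep G Q →
        w ∈ P → HasChord (scomp G S) C := by
      intro P Q hPQ hP hQ hwP
      obtain ⟨b, c, h1, h2, h3, h4, h5, _, _, _, h9⟩ := cycle_nbrs_at C hC hlen hw
      have gb : G.Adj w b := adj_of_scomp_out h1 (fun hs => hwS hs.1)
      have gc : G.Adj w c := adj_of_scomp_out h2 (fun hs => hwS hs.1)
      have hbS : b ∈ S := (hvc w b gb).resolve_left hwS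
      have hcS : c ∈ S := (hvc w c gc).resolve_left hwS
      have hbQ : b ∈ Q := (hPQ b).resolve_left (fun hbP => hP hwP hbP gb)
      have hcQ : c ∈ Q := (hPQ c).resolve_left (fun hcP => hP hwP hcP gc)
      exact ⟨b, c, h3, h4, scomp_adj_inS hbS hcS h5 (hQ hbQ hcQ), h9⟩
    rcases part_of w with hwP | hwP
    · exact case1 A B part_of hA hB hwP
    · exact case1 B A (fun z => (part_of z).symm) hB hA hwP
  · push_neg at hout
    by_cases hsp : ∃ p q : V, p ∈ C.support ∧ q ∈ C.support ∧ p ≠ q ∧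
        ((p ∈ A ∧ q ∈ A) ∨ (p ∈ B ∧ q ∈ B)) ∧ s(p, q) ∉ C.edges
    · obtain ⟨p, q, hp, hq, hne, hpq, hnotin⟩ := hsp
      have hnadj : ¬G.Adj p q := by
        rcases hpq with ⟨h1, h2⟩ | ⟨h1, h2⟩
        · exact hA h1 h2
        · exact hB h1 h2
      exact ⟨p, q, hp, hq, scomp_adj_inS (hout p hp) (hout q hq) hne hnadj, hnotin⟩
    · push_neg at hsp
      have hedge_same : ∀ p q : V, p ∈ C.support → q ∈ C.support → p ≠ q →
          ((p ∈ A ∧ q ∈ A) ∨ (p ∈ B ∧ q ∈ B)) → s(p, q) ∈ C.edges := hsp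
      have no3 : ∀ p q r : V, p ∈ C.support → q ∈ C.support → r ∈ C.support →
          p ≠ q → p ≠ r → q ≠ r →
          ((p ∈ A ∧ q ∈ A ∧ r ∈ A) ∨ (p ∈ B ∧ q ∈ B ∧ r ∈ B)) → False := by
        intro p q r hp hq hr hpq hpr hqr hparts
        obtain ⟨b, c, _, _, _, _, hbc, _, _, honly, hno⟩ := cycle_nbrs_at C hC hlen hp
        have hq' : q = b ∨ q = c := honly q (hedge_same p q hp hq hpq (by tauto))
        have hr' : r = b ∨ r = c := honly r (hedge_same p r hp hr hpr (by tauto))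
        have hqr' : s(q, r) ∈ C.edges := hedge_same q r hq hr hqr (by tauto)
        rcases hq' with rfl | rfl <;> rcases hr' with rfl | rfl
        · exact hqr rfl
        · exact hno hqr'
        · exact hno (Sym2.eq_swap ▸ hqr')
        · exact hqr rfl
      obtain ⟨htrail, hnenil, hnodup⟩ := (Walk.isCycle_def C).mp hC
      have hl0 : 0 < C.length := by omega
      set T := C.support.tail.toFinset with hT
      have hmemT : ∀ z : V, z ∈ C.support ↔ z ∈ T := by
        intro z
        rw [mem_support_iff_tail C hl0, hT, List.mem_toFinset]
      have hTcard : T.card = C.length := by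
        rw [hT, List.toFinset_card_of_nodup hnodup, List.length_tail, C.length_support]
        omega
      set AF := T.filter (· ∈ A) with hAF
      set BF := T.filter (· ∈ B) with hBF
      have hAF2 : AF.card ≤ 2 := by
        by_contra hgt
        push_neg at hgt
        obtain ⟨p, q, r, hp, hq, hr, hpq, hpr, hqr⟩ := Finset.two_lt_card_iff.mp hgt
        rw [hAF, Finset.mem_filter] at hp hq hr
        exact no3 p q r ((hmemT p).mpr hp.1) ((hmemT q).mpr hq.1) ((hmemT r).mpr hr.1)
          hpq hpr hqr (Or.inl ⟨hp.2, hq.2, hr.2⟩)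
      have hBF2 : BF.card ≤ 2 := by
        by_contra hgt
        push_neg at hgt
        obtain ⟨p, q, r, hp, hq, hr, hpq, hpr, hqr⟩ := Finset.two_lt_card_iff.mp hgt
        rw [hBF, Finset.mem_filter] at hp hq hr
        exact no3 p q r ((hmemT p).mpr hp.1) ((hmemT q).mpr hq.1) ((hmemT r).mpr hr.1)
          hpq hpr hqr (Or.inr ⟨hp.2, hq.2, hr.2⟩)
      have hunion : AF ∪ BF = T := by
        ext z
        simp only [hAF, hBF, Finset.mem_union, Finset.mem_filter]
        constructor
        · rintro (⟨h, _⟩ | ⟨h, _⟩) <;> exact h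
        · intro h
          rcases part_of z with hz | hz
          · exact Or.inl ⟨h, hz⟩
          · exact Or.inr ⟨h, hz⟩
      have hcard4 : C.length = 4 := by
        have hle := Finset.card_union_le AF BF
        rw [hunion, hTcard] at hle
        omega
      have hcards : AF.card = 2 ∧ BF.card = 2 := by
        have hle := Finset.card_union_le AF BF
        rw [hunion, hTcard, hcard4] at hle
        omega
      obtain ⟨x₁, x₂, hx12, hAFeq⟩ := Finset.card_eq_two.mp hcards.1
      obtain ⟨y₁, y₂, hy12, hBFeq⟩ := Finset.card_eq_two.mp hcards.2
      have hx₁m : x₁ ∈ AF := by rw [hAFeq]; simp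
      have hx₂m : x₂ ∈ AF := by rw [hAFeq]; simp
      have hy₁m : y₁ ∈ BF := by rw [hBFeq]; simp
      have hy₂m : y₂ ∈ BF := by rw [hBFeq]; simp
      rw [hAF, Finset.mem_filter] at hx₁m hx₂m
      rw [hBF, Finset.mem_filter] at hy₁m hy₂m
      have hx₁sup : x₁ ∈ C.support := (hmemT x₁).mpr hx₁m.1
      have hx₂sup : x₂ ∈ C.support := (hmemT x₂).mpr hx₂m.1
      have hy₁sup : y₁ ∈ C.support := (hmemT y₁).mpr hy₁m.1
      have hy₂sup : y₂ ∈ C.support := (hmemT y₂).mpr hy₂m.1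
      have hx₁A : x₁ ∈ A := hx₁m.2
      have hx₂A : x₂ ∈ A := hx₂m.2
      have hx₁S : x₁ ∈ S := hout x₁ hx₁sup
      have hx₂S : x₂ ∈ S := hout x₂ hx₂sup
      have hsub : ∀ z ∈ C.support, z = x₁ ∨ z = x₂ ∨ z = y₁ ∨ z = y₂ := by
        intro z hz
        have : z ∈ AF ∪ BF := hunion ▸ ((hmemT z).mp hz)
        rw [hAFeq, hBFeq] at this
        simp at this
        tauto
      have tail : ∀ y y' : V, y ∈ B → y ∈ S → y ∈ C.support →
          y' ∈ B → y' ∈ S → y' ∈ C.support → y ≠ y' →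
          (∀ z ∈ C.support, z = x₁ ∨ z = x₂ ∨ z = y ∨ z = y') →
          (scomp G S).Adj x₁ y → s(x₂, y) ∉ C.edges → HasChord (scomp G S) C := by
        intro y y' hyB hyS hysup hy'B hy'S hy'sup hyy' hsub' hx1y hnx2y
        by_cases hc1 : (scomp G S).Adj x₂ y
        · exact ⟨x₂, y, hx₂sup, hysup, hc1, hnx2y⟩
        have hgx2y : G.Adj x₂ y := adj_of_not_scomp_inS (hABne hx₂A hyB) hx₂S hyS hc1
        obtain ⟨b', c', hb'adj, hc'adj, hb'sup, hc'sup, hb'c', hb'e, hc'e, honly', hno'⟩ :=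
          cycle_nbrs_at C hC hlen hx₂sup
        have hx1bc : x₁ = b' ∨ x₁ = c' := honly' x₁
          (by rw [Sym2.eq_swap]; exact hedge_same x₁ x₂ hx₁sup hx₂sup hx12 (Or.inl ⟨hx₁A, hx₂A⟩))
        obtain ⟨o, hoadj, hoe, hnoe, hosup, honx1⟩ :
            ∃ o : V, (scomp G S).Adj x₂ o ∧ s(x₂, o) ∈ C.edges ∧ s(x₁, o) ∉ C.edges ∧
              o ∈ C.support ∧ o ≠ x₁ := by
          rcases hx1bc with rfl | rfl
          · exact ⟨c', hc'adj, hc'e, hno', hc'sup, hb'c'.symm⟩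
          · exact ⟨b', hb'adj, hb'e, fun h => hno' (Sym2.eq_swap ▸ h), hb'sup, hb'c'⟩
        have hosupS : o ∈ S := hout o hosup
        have honx2 : o ≠ x₂ := fun h => (scomp G S).loopless.irrefl _ (h ▸ hoadj)
        have hony : o ≠ y := fun h => hnx2y (h ▸ hoe)
        have ho' : o = y' := by
          rcases hsub' o hosup with h | h | h | h
          · exact absurd h honx1
          · exact absurd h honx2
          · exact absurd h hony
          · exact h
        subst ho'
        by_cases hc2 : (scomp G S).Adj x₁ o
        · exact ⟨x₁, o, hx₁sup, hy'sup, hc2, hnoe⟩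
        have hgx1y' : G.Adj x₁ o := adj_of_not_scomp_inS (hABne hx₁A hy'B) hx₁S hy'S hc2
        have hng1 : ¬G.Adj x₁ y := not_adj_of_scomp_inS hx1y hx₁S hyS
        have hng2 : ¬G.Adj x₂ o := not_adj_of_scomp_inS hoadj hx₂S hy'S
        exact absurd ⟨x₂, y, x₁, o, hx₂S, hyS, hx₁S, hy'S,
          hABne hx₂A hyB, hx12.symm, hABne hx₂A hy'B, (hABne hx₁A hyB).symm, hyy',
          hABne hx₁A hy'B, hgx2y, hgx1y',
          fun h => hA hx₂A hx₁A h, hng2, fun h => hng1 h.symm, hB hyB hy'B⟩ h2k2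
      obtain ⟨b, c, hbadj, hcadj, hbsup, hcsup, hbc, hbe, hce, honly, hno⟩ :=
        cycle_nbrs_at C hC hlen hx₁sup
      have hx2bc : x₂ = b ∨ x₂ = c := honly x₂
        (hedge_same x₁ x₂ hx₁sup hx₂sup hx12 (Or.inl ⟨hx₁A, hx₂A⟩))
      obtain ⟨o, hoadj, hnoe, hosup, honx2⟩ :
          ∃ o : V, (scomp G S).Adj x₁ o ∧ s(x₂, o) ∉ C.edges ∧ o ∈ C.support ∧ o ≠ x₂ := by
        rcases hx2bc with rfl | rfl
        · exact ⟨c, hcadj, hno, hcsup, hbc.symm⟩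
        · exact ⟨b, hbadj, fun h => hno (Sym2.eq_swap ▸ h), hbsup, hbc⟩
      have honx1 : o ≠ x₁ := fun h => (scomp G S).loopless.irrefl _ (h ▸ hoadj)
      have ho : o = y₁ ∨ o = y₂ := by
        rcases hsub o hosup with h | h | h | h
        · exact absurd h honx1
        · exact absurd h honx2
        · exact Or.inl h
        · exact Or.inr h
      rcases ho with rfl | rfl
      · exact tail o y₂ hy₁m.2 (hout o hosup) hosup hy₂m.2 (hout y₂ hy₂sup) hy₂sup
          hy12 hsub hoadj hnoe
      · refine tail o y₁ hy₂m.2 (hout o hosup) hosup hy₁m.2 (hout y₁ hy₁sup) hy₁sup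
          hy12.symm (fun z hz => ?_) hoadj hnoe
        rcases hsub z hz with h | h | h | h
        · exact Or.inl h
        · exact Or.inr (Or.inl h)
        · exact Or.inr (Or.inr (Or.inr h))
        · exact Or.inr (Or.inr (Or.inl h))

end Backward

section Forward

open SimpleGraph Walk

variable {V : Type*}

theorem cross_adj (G : SimpleGraph V)
    (h2conn : ∀ v : V, (G.induce {u : V | u ≠ v}).Connected)
    (A B : Set V) (hpart : A ∪ B = Set.univ) (hdisj : Disjoint A B)
    (hA : IsIndep G A) (hB : IsIndep G B) (S : Set V)
    (hch : Chordal (scomp G S))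
    {u v : V} (hu : u ∈ A) (hv : v ∈ B) (huv : G.Adj u v) (huS : u ∉ S) (hvS : v ∉ S)
    {x y : V} (hxA : x ∈ A) (hxS : x ∈ S) (hyB : y ∈ B) (hyS : y ∈ S) : G.Adj x y := by
  classical
  by_contra hxy
  set H := scomp G S with hH
  have part_of : ∀ z : V, z ∈ A ∨ z ∈ B := fun z => by
    have : z ∈ A ∪ B := hpart ▸ Set.mem_univ z
    exact this
  have hABne : ∀ {p q : V}, p ∈ A → q ∈ B → p ≠ q := fun hp hq h =>
    Set.disjoint_left.mp hdisj hp (h ▸ hq)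
  have hune : u ≠ v := huv.ne
  have hxyne : x ≠ y := hABne hxA hyB
  have hHxy : H.Adj x y := scomp_adj_inS hxS hyS hxyne hxy
  set H' := H.deleteEdges {s(u, v)} with hH'
  have hH'adj : ∀ {p q : V}, H'.Adj p q ↔ H.Adj p q ∧ s(p, q) ≠ s(u, v) := by
    intro p q
    rw [hH', SimpleGraph.deleteEdges_adj]
    simp
  have hne_uv_S : ∀ {p q : V}, p ∈ S → s(p, q) ≠ s(u, v) := by
    intro p q hp h
    rcases Sym2.eq_iff.mp h with ⟨rfl, _⟩ | ⟨rfl, _⟩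
    · exact huS hp
    · exact hvS hp
  have hne_uv_ne : ∀ {p q : V}, p ≠ u → q ≠ u → s(p, q) ≠ s(u, v) := by
    intro p q hpu hqu h
    rcases Sym2.eq_iff.mp h with ⟨rfl, _⟩ | ⟨_, rfl⟩
    · exact hpu rfl
    · exact hqu rfl
  -- Step A : u and v are connected in H minus the edge uv
  have hreach : H'.Reachable v u := by
    by_contra hnr
    set U := {w : V | H'.Reachable u w} with hU
    have huU : u ∈ U := Reachable.refl u
    have hvU : v ∉ U := fun h => hnr h.symm
    have hcl : ∀ {p q : V}, p ∈ U → H'.Adj p q → q ∈ U := fun hp h => hp.trans h.reachable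
    have hbd : ∀ {p q : V}, p ∈ U → q ∉ U → p ∈ S → q ∈ S → p ≠ q → G.Adj p q := by
      intro p q hp hq hpS hqS hne
      by_contra hg
      exact hq (hcl hp (hH'adj.mpr ⟨scomp_adj_inS hpS hqS hne hg, hne_uv_S hpS⟩))
    have hlink : x ∈ U ↔ y ∈ U := by
      have h1 : H'.Adj x y := hH'adj.mpr ⟨hHxy, hne_uv_S hxS⟩
      exact ⟨fun h => hcl h h1, fun h => hcl h h1.symm⟩
    by_cases hxU : x ∈ U
    · have hyU : y ∈ U := hlink.mp hxU
      have hSU : ∀ s ∈ S, s ∈ U := by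
        intro s hs
        by_contra hsU
        rcases part_of s with hsA | hsB
        · exact hA hxA hsA (hbd hxU hsU hxS hs (fun h => hsU (h ▸ hxU)))
        · exact hB hyB hsB (hbd hyU hsU hyS hs (fun h => hsU (h ▸ hyU)))
      have hxne : x ≠ u := fun h => huS (h ▸ hxS)
      have hvne : v ≠ u := hune.symm
      obtain ⟨p⟩ := (h2conn u).preconnected ⟨x, hxne⟩ ⟨v, hvne⟩
      have hfin : (⟨v, hvne⟩ : {w : V | w ≠ u}).1 ∈ U := by
        refine walk_prop (fun z => z.1 ∈ U) p ?_ hxU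
        intro a b hab haU
        have hGab : G.Adj a.1 b.1 := by simpa using hab
        by_cases hbS : b.1 ∈ S
        · exact hSU _ hbS
        · exact hcl haU (hH'adj.mpr ⟨scomp_adj_out (fun hs => hbS hs.2) hGab,
            hne_uv_ne a.2 b.2⟩)
      exact hvU hfin
    · have hyU : y ∉ U := fun h => hxU (hlink.mpr h)
      have hSU : ∀ s ∈ S, s ∉ U := by
        intro s hs hsU
        rcases part_of s with hsA | hsB
        · exact hA hsA hxA (hbd hsU hxU hs hxS (fun h => hxU (h ▸ hsU)))
        · exact hB hsB hyB (hbd hsU hyU hs hyS (fun h => hyU (h ▸ hsU)))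
      have hxvne : x ≠ v := fun h => hvS (h ▸ hxS)
      obtain ⟨p⟩ := (h2conn v).preconnected ⟨u, hune⟩ ⟨x, hxvne⟩
      have hfin : (⟨x, hxvne⟩ : {w : V | w ≠ v}).1 ∈ U := by
        refine walk_prop (fun z => z.1 ∈ U) p ?_ huU
        intro a b hab haU
        have hGab : G.Adj a.1 b.1 := by simpa using hab
        have haS : a.1 ∉ S := fun hs => hSU a.1 hs haU
        refine hcl haU (hH'adj.mpr ⟨scomp_adj_out (fun hs => haS hs.1) hGab, ?_⟩)
        intro h
        rcases Sym2.eq_iff.mp h with ⟨_, h2⟩ | ⟨h1, _⟩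
        · exact b.2 h2
        · exact a.2 h1
      exact hxU hfin
  -- Step B : build a chordless cycle through the edge uv
  have hHuv : H.Adj u v := scomp_adj_out (fun hs => huS hs.1) huv
  have hnocom : ∀ w : V, H.Adj u w → H.Adj v w → False := by
    intro w h1 h2
    have g1 : G.Adj u w := adj_of_scomp_out h1 (fun hs => huS hs.1)
    have g2 : G.Adj v w := adj_of_scomp_out h2 (fun hs => hvS hs.1)
    rcases part_of w with hw | hw
    · exact hA hu hw g1
    · exact hB hv hw g2
  have hex : ∃ n, ∃ w : H.Walk v u, w.length = n ∧ s(u, v) ∉ w.edges := by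
    obtain ⟨q⟩ := hreach
    have hq : ∀ e ∈ q.edges, e ∈ H.edgeSet := fun e he =>
      SimpleGraph.edgeSet_mono (SimpleGraph.deleteEdges_le _) (q.edges_subset_edgeSet he)
    refine ⟨_, q.transfer H hq, rfl, ?_⟩
    rw [Walk.edges_transfer]
    intro he
    have h2 : s(u, v) ∈ H'.edgeSet := q.edges_subset_edgeSet he
    rw [SimpleGraph.mem_edgeSet, hH'adj] at h2
    exact h2.2 rfl
  set L := Nat.find hex with hLdef
  obtain ⟨w₀, hw₀len, hw₀e⟩ := Nat.find_spec hex
  have hmin : ∀ q : H.Walk v u, s(u, v) ∉ q.edges → L ≤ q.length := fun q hq =>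
    Nat.find_min' hex ⟨q, rfl, hq⟩
  obtain ⟨P, hPpath, hPL, hPe⟩ :
      ∃ P : H.Walk v u, P.IsPath ∧ P.length = L ∧ s(u, v) ∉ P.edges := by
    refine ⟨w₀.bypass, w₀.bypass_isPath, ?_, fun h => hw₀e (w₀.edges_bypass_subset h)⟩
    have h1 : w₀.bypass.length ≤ L := by
      rw [hLdef, ← hw₀len]
      exact w₀.length_bypass_le
    exact le_antisymm h1 (hmin _ (fun h => hw₀e (w₀.edges_bypass_subset h)))
  have hL3 : 3 ≤ P.length := by
    rcases P with _ | ⟨h1, P1⟩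
    · exact absurd rfl hune
    · rcases P1 with _ | ⟨h2, P2⟩
      · exfalso
        apply hPe
        simp [Sym2.eq_swap]
      · rcases P2 with _ | ⟨h3, P3⟩
        · exact (hnocom _ h2.symm h1).elim
        · simp only [Walk.length_cons]
          omega
  have hL3' : 3 ≤ L := hPL ▸ hL3
  set C := Walk.cons hHuv P with hCdef
  have hCcyc : C.IsCycle := (Walk.cons_isCycle_iff P hHuv).mpr ⟨hPpath, hPe⟩
  have hClen : 4 ≤ C.length := by
    rw [hCdef, Walk.length_cons]
    omega
  obtain ⟨x', y', hx'sup, hy'sup, hadj', hnotin⟩ := hch u C hCcyc hClen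
  have hmemP : ∀ {z : V}, z ∈ C.support → z ∈ P.support := by
    intro z hz
    rw [hCdef, Walk.support_cons] at hz
    rcases List.mem_cons.mp hz with rfl | h
    · exact P.end_mem_support
    · exact h
  have hx'P : x' ∈ P.support := hmemP hx'sup
  have hy'P : y' ∈ P.support := hmemP hy'sup
  have hnotinP : s(x', y') ∉ P.edges ∧ s(x', y') ≠ s(u, v) := by
    rw [hCdef, Walk.edges_cons] at hnotin
    exact ⟨fun h => hnotin (List.mem_cons_of_mem _ h),
      fun h => hnotin (h ▸ List.mem_cons_self)⟩
  have hgv : ∀ (z : V) (hz : z ∈ P.support), P.getVert (P.takeUntil z hz).length = z := by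
    intro z hz
    have hsp := P.take_spec hz
    set t := P.takeUntil z hz with ht
    set d := P.dropUntil z hz with hd
    rw [← hsp, Walk.getVert_append]
    simp
  have key : ∀ (p q : V) (hp : p ∈ P.support) (hq : q ∈ P.support), H.Adj p q →
      s(p, q) ∉ P.edges → s(p, q) ≠ s(u, v) →
      (P.takeUntil p hp).length < (P.takeUntil q hq).length → False := by
    intro p q hp hq hadj hnmem hnuv hlt
    have hq2 : s(u, v) ∉ ((P.takeUntil p hp).append
        (Walk.cons hadj (P.dropUntil q hq))).edges := by
      rw [Walk.edges_append, Walk.edges_cons]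
      intro hmem
      rcases List.mem_append.mp hmem with h | h
      · exact hPe (P.edges_takeUntil_subset hp h)
      · rcases List.mem_cons.mp h with h | h
        · exact hnuv h.symm
        · exact hPe (P.edges_dropUntil_subset hq h)
    have hts := congrArg Walk.length (P.take_spec hq)
    rw [Walk.length_append] at hts
    have hlen2 : ((P.takeUntil p hp).append (Walk.cons hadj (P.dropUntil q hq))).length
        = (P.takeUntil p hp).length + 1 + (P.length - (P.takeUntil q hq).length) := by
      rw [Walk.length_append, Walk.length_cons]
      omega
    have hmin2 := hmin _ hq2
    rw [hlen2] at hmin2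
    have ht2le : (P.takeUntil q hq).length ≤ P.length := P.length_takeUntil_le hq
    have ht21 : (P.takeUntil q hq).length = (P.takeUntil p hp).length + 1 := by omega
    have hcons : s(P.getVert (P.takeUntil p hp).length,
        P.getVert ((P.takeUntil p hp).length + 1)) ∈ P.edges :=
      getVert_consec_mem_edges P _ (by omega)
    have e1 : P.getVert (P.takeUntil p hp).length = p := hgv p hp
    have e2 : P.getVert ((P.takeUntil p hp).length + 1) = q := by
      rw [← ht21]
      exact hgv q hq
    rw [e1, e2] at hcons
    exact hnmem hcons
  have hne12 : (P.takeUntil x' hx'P).length ≠ (P.takeUntil y' hy'P).length := by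
    intro h
    have hxy' : x' = y' := by
      rw [← hgv x' hx'P, h, hgv y' hy'P]
    exact hadj'.ne hxy'
  rcases lt_or_gt_of_ne hne12 with hlt | hlt
  · exact key x' y' hx'P hy'P hadj' hnotinP.1 hnotinP.2 hlt
  · refine key y' x' hy'P hx'P hadj'.symm ?_ ?_ hlt
    · rw [Sym2.eq_swap]
      exact hnotinP.1
    · rw [Sym2.eq_swap]
      exact hnotinP.2

end Forward

section Forward2

open SimpleGraph Walk

variable {V : Type*}

theorem c4_chordless (G : SimpleGraph V) (S : Set V)
    (hch : Chordal (scomp G S)) {a b c d : V}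
    (haS : a ∈ S) (hbS : b ∈ S) (hcS : c ∈ S) (hdS : d ∈ S)
    (hab : a ≠ b) (hac : a ≠ c) (had : a ≠ d) (hbc : b ≠ c) (hbd : b ≠ d) (hcd : c ≠ d)
    (gab : G.Adj a b) (gcd : G.Adj c d)
    (hHac : (scomp G S).Adj a c) (hHcb : (scomp G S).Adj c b)
    (hHbd : (scomp G S).Adj b d) (hHda : (scomp G S).Adj d a) : False := by
  classical
  set H := scomp G S with hH
  have hnab : ¬H.Adj a b := fun h => not_adj_of_scomp_inS h haS hbS gab
  have hncd : ¬H.Adj c d := fun h => not_adj_of_scomp_inS h hcS hdS gcd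
  set W : H.Walk a a := Walk.cons hHac (Walk.cons hHcb (Walk.cons hHbd
    (Walk.cons hHda Walk.nil))) with hW
  have hWcyc : W.IsCycle := by
    rw [hW, Walk.isCycle_def]
    refine ⟨?_, by simp, ?_⟩
    · rw [Walk.isTrail_def]
      simp only [Walk.edges_cons, Walk.edges_nil, List.nodup_cons, List.mem_cons,
        List.not_mem_nil, or_false, List.nodup_nil, and_true, Sym2.eq_iff]
      tauto
    · simp only [Walk.support_cons, Walk.support_nil, List.tail_cons, List.nodup_cons,
        List.mem_cons, List.not_mem_nil, or_false, List.nodup_nil, and_true,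
        List.mem_singleton]
      tauto
  have hWlen : 4 ≤ W.length := by
    rw [hW]
    simp
  obtain ⟨p, q, hp, hq, hadj, hne⟩ := hch a W hWcyc hWlen
  have hsup : ∀ {z : V}, z ∈ W.support → z = a ∨ z = c ∨ z = b ∨ z = d := by
    intro z hz
    rw [hW] at hz
    simp only [Walk.support_cons, Walk.support_nil, List.mem_cons,
      List.not_mem_nil, or_false, List.mem_singleton] at hz
    tauto
  have hedges : ∀ (z w : V), z ≠ w →
      (s(z, w) = s(a, c) ∨ s(z, w) = s(c, b) ∨ s(z, w) = s(b, d) ∨ s(z, w) = s(d, a)) →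
      s(z, w) ∈ W.edges := by
    intro z w _ hzw
    rw [hW]
    simp only [Walk.edges_cons, Walk.edges_nil, List.mem_cons, List.not_mem_nil, or_false]
    tauto
  rcases hsup hp with rfl | rfl | rfl | rfl <;> rcases hsup hq with rfl | rfl | rfl | rfl <;>
    first
      | exact H.loopless.irrefl _ hadj
      | exact hnab hadj
      | exact hnab hadj.symm
      | exact hncd hadj
      | exact hncd hadj.symm
      | exact hne (hedges _ _ hadj.ne (by simp [Sym2.eq_iff]; try tauto))

end Forward2

theorem stmt8 {V : Type*} [Fintype V] (G : SimpleGraph V)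
    (hcard : 3 ≤ Fintype.card V)
    (h2conn : ∀ v : V, (G.induce {u : V | u ≠ v}).Connected)
    (A B : Set V)
    (hpart : A ∪ B = Set.univ) (hdisj : Disjoint A B)
    (hA : IsIndep G A) (hB : IsIndep G B)
    (S : Set V)
    (hnotcb : ¬ ∃ X Y : Set V, X ∪ Y = S ∧ Disjoint X Y ∧
      IsIndep G X ∧ IsIndep G Y ∧ ∀ x ∈ X, ∀ y ∈ Y, G.Adj x y) :
    Chordal (scomp G S) ↔
      ((∀ u v : V, G.Adj u v → u ∈ S ∨ v ∈ S) ∧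
       ¬ ∃ a b c d : V, a ∈ S ∧ b ∈ S ∧ c ∈ S ∧ d ∈ S ∧
         a ≠ b ∧ a ≠ c ∧ a ≠ d ∧ b ≠ c ∧ b ≠ d ∧ c ≠ d ∧
         G.Adj a b ∧ G.Adj c d ∧
         ¬ G.Adj a c ∧ ¬ G.Adj a d ∧ ¬ G.Adj b c ∧ ¬ G.Adj b d) := by
  classical
  have part_of : ∀ z : V, z ∈ A ∨ z ∈ B := fun z => by
    have : z ∈ A ∪ B := hpart ▸ Set.mem_univ z
    exact this
  have hunion : (A ∩ S) ∪ (B ∩ S) = S := by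
    rw [← Set.union_inter_distrib_right, hpart, Set.univ_inter]
  constructor
  · intro hch
    constructor
    · -- S is a vertex cover
      intro u v huv
      by_contra hns
      push_neg at hns
      obtain ⟨huS, hvS⟩ := hns
      apply hnotcb
      rcases part_of u with hu | hu
      · have hv' : v ∈ B := by
          rcases part_of v with h | h
          · exact absurd huv (hA hu h)
          · exact h
        refine ⟨A ∩ S, B ∩ S, hunion,
          hdisj.mono Set.inter_subset_left Set.inter_subset_left,
          fun p hp q hq => hA hp.1 hq.1, fun p hp q hq => hB hp.1 hq.1, ?_⟩
        intro p hp q hq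
        exact cross_adj G h2conn A B hpart hdisj hA hB S hch hu hv' huv huS hvS
          hp.1 hp.2 hq.1 hq.2
      · have hv' : v ∈ A := by
          rcases part_of v with h | h
          · exact h
          · exact absurd huv (hB hu h)
        refine ⟨A ∩ S, B ∩ S, hunion,
          hdisj.mono Set.inter_subset_left Set.inter_subset_left,
          fun p hp q hq => hA hp.1 hq.1, fun p hp q hq => hB hp.1 hq.1, ?_⟩
        intro p hp q hq
        exact (cross_adj G h2conn B A (by rw [Set.union_comm]; exact hpart) hdisj.symm
          hB hA S hch hu hv' huv huS hvS hq.1 hq.2 hp.1 hp.2).symm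
    · -- no induced 2K₂ inside S
      rintro ⟨a, b, c, d, haS, hbS, hcS, hdS, hab, hac, had, hbc, hbd, hcd,
        gab, gcd, nac, nad, nbc, nbd⟩
      have key : ∀ p q r t : V, p ∈ A → q ∈ B → r ∈ A → t ∈ B →
          p ∈ S → q ∈ S → r ∈ S → t ∈ S →
          p ≠ q → p ≠ r → p ≠ t → q ≠ r → q ≠ t → r ≠ t →
          G.Adj p q → G.Adj r t → ¬G.Adj p r → ¬G.Adj p t → ¬G.Adj q r →
          ¬G.Adj q t → False := by
        intro p q r t hpA hqB hrA htB hpS hqS hrS htS h1 h2 h3 h4 h5 h6 g1 g2 n1 n2 n3 n4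
        exact c4_chordless G S hch hpS hqS hrS htS h1 h2 h3 h4 h5 h6 g1 g2
          (scomp_adj_inS hpS hrS h2 (hA hpA hrA))
          (scomp_adj_inS hrS hqS h4.symm (fun h => n3 h.symm))
          (scomp_adj_inS hqS htS h5 (hB hqB htB))
          (scomp_adj_inS htS hpS h3.symm (fun h => n2 h.symm))
      rcases part_of a with haA | haB
      · have hbB : b ∈ B := by
          rcases part_of b with h | h
          · exact absurd gab (hA haA h)
          · exact h
        rcases part_of c with hcA | hcB
        · have hdB : d ∈ B := by
            rcases part_of d with h | h
            · exact absurd gcd (hA hcA h)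
            · exact h
          exact key a b c d haA hbB hcA hdB haS hbS hcS hdS hab hac had hbc hbd hcd
            gab gcd nac nad nbc nbd
        · have hdA : d ∈ A := by
            rcases part_of d with h | h
            · exact h
            · exact absurd gcd (hB hcB h)
          exact key a b d c haA hbB hdA hcB haS hbS hdS hcS hab had hac hbd hbc hcd.symm
            gab gcd.symm nad nac nbd nbc
      · have hbA : b ∈ A := by
          rcases part_of b with h | h
          · exact h
          · exact absurd gab (hB haB h)
        rcases part_of c with hcA | hcB
        · have hdB : d ∈ B := by
            rcases part_of d with h | h
            · exact absurd gcd (hA hcA h)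
            · exact h
          exact key b a c d hbA haB hcA hdB hbS haS hcS hdS hab.symm hbc hbd hac had hcd
            gab.symm gcd nbc nbd nac nad
        · have hdA : d ∈ A := by
            rcases part_of d with h | h
            · exact h
            · exact absurd gcd (hB hcB h)
          exact key b a d c hbA haB hdA hcB hbS haS hdS hcS hab.symm hbd hbc had hac hcd.symm
            gab.symm gcd.symm nbd nbc nad nac
  · rintro ⟨hvc, h2k2⟩
    exact backward G A B hpart hdisj hA hB S hvc h2k2
end

section
/- Let G be a 2-connected bipartite simple graph on a finite vertex type with bipartition (A, B), and let S ⊆ A. If G ⊕ S is chordal, then S = A. -/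
open SimpleGraph

private lemma walk_two_le_length' {V : Type*} {G : SimpleGraph V} {u v : V}
    (p : G.Walk u v) (hne : u ≠ v) (he : s(u, v) ∉ p.edges) : 2 ≤ p.length := by
  cases p with
  | nil => exact absurd rfl hne
  | cons h q =>
    cases q with
    | nil => simp at he
    | cons h' q' => simp only [Walk.length_cons]; omega

theorem stmt9 {V : Type*} [Fintype V] (G : SimpleGraph V)
    (hcard : 3 ≤ Fintype.card V)
    (h2conn : ∀ v : V, (G.induce {u : V | u ≠ v}).Connected)
    (A B : Set V)
    (hpart : A ∪ B = Set.univ) (hdisj : Disjoint A B)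
    (hA : IsIndep G A) (hB : IsIndep G B)
    (S : Set V) (hSA : S ⊆ A)
    (hchordal : Chordal (scomp G S)) :
    S = A := by
  classical
  set H := scomp G S with hHdef
  have hle : G ≤ H := by
    intro u v huv
    exact ⟨huv.ne, Or.inr ⟨fun hs => hA (hSA hs.1) (hSA hs.2) huv, huv⟩⟩
  refine Set.Subset.antisymm hSA fun a ha => ?_
  by_contra haS
  have hBnotS : ∀ {v}, v ∈ B → v ∉ S := fun {v} hv hvS =>
    Set.disjoint_left.mp hdisj (hSA hvS) hv
  have hmemB : ∀ {v}, G.Adj a v → v ∈ B := by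
    intro v hv
    have hmem : v ∈ A ∪ B := hpart ▸ Set.mem_univ v
    rcases hmem with h | h
    · exact absurd hv (hA ha h)
    · exact h
  have hadjB : ∀ {u v : V}, u ∈ B → H.Adj u v → G.Adj u v := by
    rintro u v hu ⟨hne, ⟨⟨hus, _⟩, _⟩ | ⟨_, h⟩⟩
    · exact absurd hus (hBnotS hu)
    · exact h
  have hadj_a : ∀ {v}, H.Adj a v → G.Adj a v := by
    rintro v ⟨hne, ⟨⟨hus, _⟩, _⟩ | ⟨_, h⟩⟩
    · exact absurd hus haS
    · exact h
  -- a third vertex always exists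
  have hthird : ∀ x y : V, ∃ z, z ≠ x ∧ z ≠ y := by
    intro x y
    by_contra hcon
    push_neg at hcon
    have hsub : (Finset.univ : Finset V) ⊆ {x, y} := by
      intro z _
      rcases eq_or_ne z x with rfl | hz
      · exact Finset.mem_insert_self _ _
      · simp [hcon z hz]
    have h2 : Fintype.card V ≤ 2 := by
      calc Fintype.card V = Finset.univ.card := (Finset.card_univ).symm
        _ ≤ ({x, y} : Finset V).card := Finset.card_le_card hsub
        _ ≤ 2 := (Finset.card_insert_le _ _).trans (by simp)
    omega
  -- a has a neighbor avoiding any given vertex v ≠ a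
  have hnbr : ∀ v : V, a ≠ v → ∃ x, x ≠ v ∧ G.Adj a x := by
    intro v hav
    obtain ⟨w, hwa, hwv⟩ := hthird a v
    obtain ⟨p⟩ := (h2conn v).preconnected ⟨a, hav⟩ ⟨w, hwv⟩
    have hnil : ¬ p.Nil := Walk.not_nil_of_ne (by
      simp only [ne_eq, Subtype.mk.injEq]
      exact fun h => hwa h.symm)
    have hadj := Walk.adj_snd hnil
    exact ⟨(p.getVert 1).1, (p.getVert 1).2, hadj⟩
  -- two distinct neighbors of a
  obtain ⟨b₁, hab₁⟩ : ∃ b, G.Adj a b := by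
    obtain ⟨z, hza, _⟩ := hthird a a
    obtain ⟨x, _, hx⟩ := hnbr z (fun h => hza h.symm)
    exact ⟨x, hx⟩
  obtain ⟨b₂, hb21, hab₂⟩ := hnbr b₁ hab₁.ne
  -- there is a cycle in H through a
  have hcyc_ex : ∃ n, ∃ (r : V) (C : H.Walk r r),
      C.IsCycle ∧ a ∈ C.support ∧ C.length = n := by
    obtain ⟨p0⟩ := (h2conn a).preconnected ⟨b₁, hab₁.ne'⟩ ⟨b₂, hab₂.ne'⟩
    let f : (G.induce {u : V | u ≠ a}) →g G := ⟨Subtype.val, fun h => h⟩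
    let q : G.Path b₁ b₂ := (p0.map f).toPath
    have hqa : a ∉ (q : G.Walk b₁ b₂).support := by
      intro hmem
      have hmem2 := Walk.support_toPath_subset _ hmem
      rw [Walk.support_map] at hmem2
      obtain ⟨y, _, hy⟩ := List.mem_map.mp hmem2
      exact y.2 hy
    have hrp : ((q : G.Walk b₁ b₂).concat hab₂.symm).IsPath := by
      apply Walk.IsPath.mk'
      rw [Walk.support_concat]
      refine List.nodup_append'.mpr ⟨q.2.support_nodup, List.nodup_singleton a, ?_⟩
      intro z hz hz'
      rw [List.mem_singleton] at hz'
      subst hz'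
      exact hqa hz
    have hcyc : (Walk.cons hab₁ ((q : G.Walk b₁ b₂).concat hab₂.symm)).IsCycle := by
      rw [Walk.cons_isCycle_iff]
      refine ⟨hrp, ?_⟩
      rw [Walk.edges_concat, List.concat_eq_append, List.mem_append, List.mem_singleton]
      rintro (hmem | hmem)
      · exact hqa (Walk.fst_mem_support_of_mem_edges _ hmem)
      · rw [Sym2.eq_iff] at hmem
        rcases hmem with ⟨h1, _⟩ | ⟨_, h2⟩
        · exact hab₂.ne h1
        · exact hb21 h2.symm
    exact ⟨_, a, _, (Walk.mapLe_isCycle hle).mpr hcyc, Walk.start_mem_support _, rfl⟩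
  obtain ⟨r, C, hC, haC, hlenC⟩ := Nat.find_spec hcyc_ex
  set n := C.length with hn
  have hmin : ∀ m, m < n →
      ¬ ∃ (r : V) (C : H.Walk r r), C.IsCycle ∧ a ∈ C.support ∧ C.length = m :=
    fun m hm => Nat.find_min hcyc_ex (hlenC ▸ hm)
  -- rotate the minimal cycle to start at a
  set D := C.rotate _ haC with hDd
  have hD : D.IsCycle := hC.rotate haC
  have hDlen : D.length = n := by
    have hp := (C.rotate_edges _ haC).perm.length_eq
    rw [Walk.length_edges, Walk.length_edges] at hp
    rw [hDd, hn]
    exact hp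
  have hn3 : 3 ≤ n := hC.three_le_length
  -- no triangle through a
  have hn4 : 4 ≤ n := by
    by_contra h4
    have h3 : D.length = 3 := by omega
    have h1 : H.Adj a (D.getVert 1) := by
      have := D.adj_getVert_succ (show 0 < D.length by omega)
      simpa using this
    have h2 : H.Adj (D.getVert 1) (D.getVert 2) :=
      D.adj_getVert_succ (show 1 < D.length by omega)
    have h3' : H.Adj (D.getVert 2) a := by
      have hh := D.adj_getVert_succ (show 2 < D.length by omega)
      rwa [show (2 + 1 : ℕ) = D.length by omega, D.getVert_length] at hh
    have hbB : D.getVert 1 ∈ B := hmemB (hadj_a h1)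
    have hcB : D.getVert 2 ∈ B := hmemB (hadj_a h3'.symm)
    exact hB hbB hcB (hadjB hbB h2)
  -- get a chord
  obtain ⟨x, y, hx, hy, hxy, hchordmem⟩ := hchordal a D hD (by omega)
  -- rotate to x
  set E := D.rotate _ hx with hEd
  have hE : E.IsCycle := hD.rotate hx
  have hElen : E.length = n := by
    have hp := (D.rotate_edges _ hx).perm.length_eq
    rw [Walk.length_edges, Walk.length_edges] at hp
    rw [hEd]
    omega
  have hEedges : s(x, y) ∉ E.edges := fun hmem =>
    hchordmem ((D.rotate_edges _ hx).perm.mem_iff.mp hmem)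
  have hyE : y ∈ E.support := by
    have hsplit : y ∈ (D.takeUntil x hx).support ∨ y ∈ (D.dropUntil x hx).support := by
      rw [← Walk.mem_support_append_iff, Walk.take_spec]
      exact hy
    show y ∈ ((D.dropUntil x hx).append (D.takeUntil x hx)).support
    rw [Walk.mem_support_append_iff]
    exact hsplit.symm
  have haE : a ∈ E.support := by
    have hsplit : a ∈ (D.takeUntil x hx).support ∨ a ∈ (D.dropUntil x hx).support := by
      rw [← Walk.mem_support_append_iff, Walk.take_spec]
      exact D.start_mem_support
    show a ∈ ((D.dropUntil x hx).append (D.takeUntil x hx)).support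
    rw [Walk.mem_support_append_iff]
    exact hsplit.symm
  -- split E at y
  set P := E.takeUntil y hyE with hPdef
  set Q := E.dropUntil y hyE with hQdef
  have hPQ : P.append Q = E := E.take_spec hyE
  have hlenPQ : P.length + Q.length = n := by
    rw [← hElen, ← hPQ, Walk.length_append]
  have hPed : s(x, y) ∉ P.edges := fun h => hEedges (E.edges_takeUntil_subset hyE h)
  have hQed : s(y, x) ∉ Q.edges := fun h => hEedges (by
    rw [Sym2.eq_swap]
    exact E.edges_dropUntil_subset hyE h)
  have hP2 : 2 ≤ P.length := walk_two_le_length' P hxy.ne hPed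
  have hQ2 : 2 ≤ Q.length := walk_two_le_length' Q hxy.ne' hQed
  have htail : E.support.tail = P.support.tail ++ Q.support.tail := by
    rw [← hPQ, Walk.tail_support_append]
  have hnd := List.nodup_append'.mp (htail ▸ hE.support_nodup)
  have hxQ : x ∈ Q.support.tail := by
    have hxs : x ∈ Q.support := Q.end_mem_support
    rw [Q.support_eq_cons] at hxs
    rcases List.mem_cons.mp hxs with h | h
    · exact absurd h hxy.ne
    · exact h
  have hyP : y ∈ P.support.tail := by
    have hys : y ∈ P.support := P.end_mem_support
    rw [P.support_eq_cons] at hys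
    rcases List.mem_cons.mp hys with h | h
    · exact absurd h hxy.ne'
    · exact h
  have hPpath : P.IsPath := by
    apply Walk.IsPath.mk'
    rw [P.support_eq_cons]
    exact List.nodup_cons.mpr ⟨fun hmem => hnd.2.2 hmem hxQ, hnd.1⟩
  have hQpath : Q.IsPath := by
    apply Walk.IsPath.mk'
    rw [Q.support_eq_cons]
    exact List.nodup_cons.mpr ⟨fun hmem => hnd.2.2 hyP hmem, hnd.2.1⟩
  have hcyc1 : (Walk.cons hxy.symm P).IsCycle := by
    rw [Walk.cons_isCycle_iff]
    refine ⟨hPpath, ?_⟩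
    rw [Sym2.eq_swap]
    exact hPed
  have hcyc2 : (Walk.cons hxy Q).IsCycle := by
    rw [Walk.cons_isCycle_iff]
    refine ⟨hQpath, ?_⟩
    rw [Sym2.eq_swap]
    exact hQed
  have haPQ : a ∈ P.support ∨ a ∈ Q.support.tail := by
    have hmem : a ∈ (P.append Q).support := hPQ.symm ▸ haE
    rwa [Walk.support_append, List.mem_append] at hmem
  rcases haPQ with haP | haQ
  · exact hmin (P.length + 1) (by omega)
      ⟨y, Walk.cons hxy.symm P, hcyc1,
        by rw [Walk.support_cons]; exact List.mem_cons_of_mem _ haP,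
        by rw [Walk.length_cons]⟩
  · exact hmin (Q.length + 1) (by omega)
      ⟨x, Walk.cons hxy Q, hcyc2,
        by rw [Walk.support_cons]; exact List.mem_cons_of_mem _ (List.mem_of_mem_tail haQ),
        by rw [Walk.length_cons]⟩
end

section
/- Let G be a triangle-free simple graph on a finite vertex type, and let S be a set of vertices of minimum size such that G ⊕ S is chordal (i.e., G ⊕ S is chordal and every set T with G ⊕ T chordal satisfies |S| ≤ |T|). Then every vertex u ∈ S has a neighbor in G that lies outside S. -/
open SimpleGraph

private lemma closed_not_nodup {V : Type*} {G : SimpleGraph V} {y : V} {w : G.Walk y y}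
    (hn : ¬ w.Nil) : ¬ w.support.Nodup := by
  obtain ⟨x, h, q, rfl⟩ := Walk.not_nil_iff.mp hn
  simp only [Walk.support_cons, List.nodup_cons]
  intro ⟨h1, _⟩
  exact h1 q.end_mem_support

private lemma edge_start {V : Type*} {G : SimpleGraph V} {x y z : V} (p : G.Walk x z)
    (hnd : p.support.Nodup) (he : s(x, y) ∈ p.edges) :
    ∃ (h : G.Adj x y) (r : G.Walk y z), p = Walk.cons h r := by
  induction p with
  | nil => simp at he
  | @cons a b c h r ih =>
    rw [Walk.support_cons, List.nodup_cons] at hnd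
    rw [Walk.edges_cons, List.mem_cons] at he
    rcases he with he | he
    · rw [Sym2.eq_iff] at he
      rcases he with ⟨-, rfl⟩ | ⟨rfl, rfl⟩
      · exact ⟨h, r, rfl⟩
      · exact absurd r.start_mem_support hnd.1
    · exact absurd (r.fst_mem_support_of_mem_edges he) hnd.1

private lemma exists_concat' {V : Type*} {G : SimpleGraph V} {x u : V} (p : G.Walk x u)
    (h : ¬ p.Nil) : ∃ (y : V) (r : G.Walk x y) (h' : G.Adj y u), p = r.concat h' := by
  cases p with
  | nil => simp [Walk.nil_nil] at h
  | cons h' q => exact Walk.exists_cons_eq_concat h' q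

theorem stmt10 {V : Type*} [Fintype V] (G : SimpleGraph V)
    (htf : G.CliqueFree 3)
    (S : Set V)
    (hchordal : Chordal (scomp G S))
    (hmin : ∀ T : Set V, Chordal (scomp G T) → S.ncard ≤ T.ncard) :
    ∀ u ∈ S, ∃ w : V, G.Adj u w ∧ w ∉ S := by
  classical
  intro u hu
  by_contra hcon
  push_neg at hcon
  set T : Set V := S \ {u} with hT
  have huT : u ∉ T := by simp [hT]
  -- adjacency transfer for vertices different from u
  have hH12 : ∀ v w : V, v ≠ u → w ≠ u → ((scomp G T).Adj v w ↔ (scomp G S).Adj v w) := by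
    intro v w hv hw
    have hmem : (v ∈ T ∧ w ∈ T) ↔ (v ∈ S ∧ w ∈ S) := by
      simp [hT, Set.mem_diff, hv, hw]
    show (v ≠ w ∧ _) ↔ (v ≠ w ∧ _)
    rw [hmem]
  -- adjacency of u in scomp G T is G-adjacency
  have hadj_u : ∀ v : V, (scomp G T).Adj u v ↔ G.Adj u v := by
    intro v
    constructor
    · rintro ⟨hne, ⟨⟨huT', -⟩, -⟩ | ⟨-, ha⟩⟩
      · exact absurd huT' huT
      · exact ha
    · intro ha
      exact ⟨G.ne_of_adj ha, Or.inr ⟨fun h => huT h.1, ha⟩⟩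
  -- scomp G T is chordal
  have hchT : Chordal (scomp G T) := by
    intro a C hC hlen
    by_cases hus : u ∈ C.support
    · -- cycle through u : its two cycle-neighbors give a chord
      set C' : (scomp G T).Walk u u := C.rotate u hus with hC'def
      have hC' : C'.IsCycle := hC.rotate hus
      have hlenC' : C'.length = C.length := by
        rw [← Walk.length_edges, ← Walk.length_edges]
        exact (C.rotate_edges u hus).perm.length_eq
      obtain ⟨x, hux, p, hcons⟩ := Walk.not_nil_iff.mp hC'.not_nil
      have hpnd : p.support.Nodup := by
        have := hC'.support_nodup
        rw [hcons, Walk.support_cons] at this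
        exact this
      have hplen : p.length = C.length - 1 := by
        have : C'.length = p.length + 1 := by rw [hcons]; simp
        omega
      have hpnnil : ¬ p.Nil := by
        rw [Walk.not_nil_iff_lt_length]; omega
      obtain ⟨y, r, hyu, hpcat⟩ := exists_concat' p hpnnil
      have hrlen : r.length = p.length - 1 := by
        have : p.length = r.length + 1 := by rw [hpcat]; simp
        omega
      have hrnnil : ¬ r.Nil := by
        rw [Walk.not_nil_iff_lt_length]; omega
      have hpsupp : p.support = r.support ++ [u] := by
        rw [hpcat, Walk.support_concat]
      have hrnd : r.support.Nodup := by
        rw [hpsupp] at hpnd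
        exact (List.nodup_append.mp hpnd).1
      -- facts about adjacency
      have hGux : G.Adj u x := (hadj_u x).mp hux
      have hGuy : G.Adj u y := (hadj_u y).mp hyu.symm
      have hxS : x ∈ S := hcon x hGux
      have hyS : y ∈ S := hcon y hGuy
      have hxu : x ≠ u := fun h => G.loopless.irrefl u (h ▸ hGux)
      have hyu' : y ≠ u := fun h => G.loopless.irrefl u (h ▸ hGuy)
      have hxy : x ≠ y := by
        rintro rfl
        exact closed_not_nodup hrnnil hrnd
      have hGxy : ¬ G.Adj x y := by
        intro h
        exact htf {u, x, y} (is3Clique_triple_iff.mpr ⟨hGux, hGuy, h⟩)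
      have hAdjTxy : (scomp G T).Adj x y :=
        ⟨hxy, Or.inl ⟨⟨⟨hxS, hxu⟩, ⟨hyS, hyu'⟩⟩, hGxy⟩⟩
      -- x and y are in the support of C
      have hxp : x ∈ p.support := p.start_mem_support
      have hyp : y ∈ p.support := by
        rw [hpsupp]
        exact List.mem_append_left _ r.end_mem_support
      have htail : C'.support.tail = p.support := by rw [hcons, Walk.support_cons, List.tail_cons]
      have hsupp_mem : ∀ z : V, z ∈ p.support → z ∈ C.support := by
        intro z hz
        have : z ∈ C.support.tail := by
          rw [← (C.support_rotate u hus).perm.mem_iff, ← hC'def, htail]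
          exact hz
        exact List.mem_of_mem_tail this
      -- the chord s(x,y) is not an edge of the cycle
      have hedges : C'.edges = s(u, x) :: (r.edges ++ [s(y, u)]) := by
        rw [hcons, hpcat, Walk.edges_cons, Walk.edges_concat, List.concat_eq_append]
      have hnotmem : s(x, y) ∉ C.edges := by
        rw [← (C.rotate_edges u hus).perm.mem_iff, ← hC'def, hedges]
        intro hmem'
        rcases List.mem_cons.mp hmem' with h | h
        · rw [Sym2.eq_iff] at h
          rcases h with ⟨h1, -⟩ | ⟨-, h2⟩
          · exact hxu h1
          · exact hyu' h2
        rcases List.mem_append.mp h with h | h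
        · obtain ⟨hadj, r', hr'⟩ := edge_start r hrnd h
          have hr'nd : r'.support.Nodup := by
            rw [hr', Walk.support_cons, List.nodup_cons] at hrnd
            exact hrnd.2
          have hr'nnil : ¬ r'.Nil := by
            rw [Walk.not_nil_iff_lt_length]
            have : r.length = r'.length + 1 := by rw [hr']; simp
            omega
          exact closed_not_nodup hr'nnil hr'nd
        · rw [List.mem_singleton, Sym2.eq_iff] at h
          rcases h with ⟨-, h2⟩ | ⟨h1, -⟩
          · exact hyu' h2
          · exact hxu h1
      exact ⟨x, y, hsupp_mem x hxp, hsupp_mem y hyp, hAdjTxy, hnotmem⟩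
    · -- cycle avoiding u : transfer it to scomp G S
      have hq : ∀ e ∈ C.edges, e ∈ (scomp G S).edgeSet := by
        intro e he
        induction e with
        | h v w =>
          have hv : v ∈ C.support := C.fst_mem_support_of_mem_edges he
          have hw : w ∈ C.support := C.snd_mem_support_of_mem_edges he
          have hadj : (scomp G T).Adj v w := C.adj_of_mem_edges he
          exact (hH12 v w (fun h => hus (h ▸ hv)) (fun h => hus (h ▸ hw))).mp hadj
      obtain ⟨x, y, hx, hy, hxy, hne⟩ :=
        hchordal a (C.transfer _ hq) (hC.transfer hq)
          (by rw [Walk.length_transfer]; exact hlen)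
      rw [Walk.support_transfer] at hx hy
      rw [Walk.edges_transfer] at hne
      exact ⟨x, y, hx, hy,
        (hH12 x y (fun h => hus (h ▸ hx)) (fun h => hus (h ▸ hy))).mpr hxy, hne⟩
  have hle := hmin T hchT
  have hlt : T.ncard < S.ncard := Set.ncard_diff_singleton_lt_of_mem hu (Set.toFinite S)
  omega
end

section
/- Let k ≥ 2, let G be a forest on a finite vertex type, and let S be a set of vertices such that G ⊕ S has degeneracy exactly k. Then |S| ≥ k. -/
open SimpleGraph

/-- `H` has degeneracy exactly `k`. -/
def DegeneracyExactly {V : Type*} (H : SimpleGraph V) (k : ℕ) : Prop :=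
  (∀ X : Set V, X.Nonempty → ∃ v ∈ X, {w | w ∈ X ∧ H.Adj v w}.ncard ≤ k) ∧
  (∃ X : Set V, X.Nonempty ∧ ∀ v ∈ X, k ≤ {w | w ∈ X ∧ H.Adj v w}.ncard)

lemma exists_leaf {V : Type*} [Fintype V] (G : SimpleGraph V) (hforest : G.IsAcyclic)
    (X : Set V) (hX : X.Nonempty) :
    ∃ v ∈ X, {w | w ∈ X ∧ G.Adj v w}.ncard ≤ 1 := by
  classical
  set L : Set ℕ :=
    {n | ∃ (a b : V) (p : G.Walk a b), p.IsPath ∧ (∀ x ∈ p.support, x ∈ X) ∧ p.length = n}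
    with hLdef
  have hLne : L.Nonempty := by
    obtain ⟨x, hx⟩ := hX
    exact ⟨0, x, x, Walk.nil, Walk.IsPath.nil, by simp [hx], rfl⟩
  have hLbdd : BddAbove L := by
    refine ⟨Fintype.card V, ?_⟩
    rintro n ⟨a, b, p, hp, -, rfl⟩
    exact hp.length_lt.le
  have hnL : sSup L ∈ L := Nat.sSup_mem hLne hLbdd
  set n := sSup L with hn
  have hmax : ∀ m ∈ L, m ≤ n := fun m hm => le_csSup hLbdd hm
  obtain ⟨a, b, p, hp, hsupp, hlen⟩ := hnL
  have hamem : a ∈ X := hsupp a p.start_mem_support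
  refine ⟨a, hamem, ?_⟩
  -- every neighbor of `a` in `X` lies on `p`
  have hkey : ∀ w, w ∈ X → G.Adj a w → w ∈ p.support := by
    intro w hwX hadj
    by_contra hws
    have hp' : (Walk.cons hadj.symm p).IsPath := by
      rw [Walk.cons_isPath_iff]; exact ⟨hp, hws⟩
    have : p.length + 1 ∈ L := by
      refine ⟨w, b, Walk.cons hadj.symm p, hp', ?_, rfl⟩
      intro x hx
      rw [Walk.support_cons, List.mem_cons] at hx
      rcases hx with rfl | hx
      · exact hwX
      · exact hsupp x hx
    have := hmax _ this
    omega
  -- every neighbor of `a` in `X` is the second vertex of `p`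
  cases p with
  | nil =>
      have : {w | w ∈ X ∧ G.Adj a w} = ∅ := by
        ext w
        simp only [Set.mem_setOf_eq, Set.mem_empty_iff_false, iff_false, not_and]
        intro hwX hadj
        have := hkey w hwX hadj
        simp only [Walk.support_nil, List.mem_singleton] at this
        exact hadj.ne this.symm
      simp [this]
  | cons h q =>
      rename_i u
      have huns : a ∉ q.support := ((Walk.cons_isPath_iff h q).1 hp).2
      have hq : q.IsPath := ((Walk.cons_isPath_iff h q).1 hp).1
      have hsub : {w | w ∈ X ∧ G.Adj a w} ⊆ {u} := by
        intro w hw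
        obtain ⟨hwX, hadj⟩ := hw
        by_contra hwu
        simp only [Set.mem_singleton_iff] at hwu
        have hws : w ∈ (Walk.cons h q).support := hkey w hwX hadj
        have hp' := hp.takeUntil hws
        have hpe : (Walk.cons hadj (Walk.nil : G.Walk w w)).IsPath := by
          rw [Walk.cons_isPath_iff]
          simp [hadj.ne]
        have heq : ((Walk.cons h q).takeUntil w hws) = Walk.cons hadj Walk.nil := by
          have := hforest.path_unique ⟨_, hp'⟩ ⟨_, hpe⟩
          exact congrArg Subtype.val this
        have hedge : s(a, w) ∈ (Walk.cons h q).edges := by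
          have hsube := Walk.edges_takeUntil_subset (Walk.cons h q) hws
          apply hsube
          rw [heq]
          simp
        rw [Walk.edges_cons, List.mem_cons] at hedge
        rcases hedge with hedge | hedge
        · rw [Sym2.eq_iff] at hedge
          rcases hedge with ⟨-, rfl⟩ | ⟨rfl, rfl⟩
          · exact hwu rfl
          · exact hadj.ne rfl
        · exact huns (Walk.fst_mem_support_of_mem_edges q hedge)
      calc {w | w ∈ X ∧ G.Adj a w}.ncard ≤ ({u} : Set V).ncard :=
            Set.ncard_le_ncard hsub (Set.finite_singleton u)
        _ = 1 := Set.ncard_singleton u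

theorem stmt12 {V : Type*} [Fintype V] (G : SimpleGraph V) (k : ℕ) (hk : 2 ≤ k)
    (hforest : G.IsAcyclic)
    (S : Set V) (hdeg : DegeneracyExactly (scomp G S) k) :
    k ≤ S.ncard := by
  classical
  obtain ⟨-, X, hXne, hX⟩ := hdeg
  obtain ⟨v, hvX, hleaf⟩ := exists_leaf G hforest X hXne
  have hdegv : k ≤ {w | w ∈ X ∧ (scomp G S).Adj v w}.ncard := hX v hvX
  have hvS : v ∈ S := by
    by_contra hvS
    have hsub : {w | w ∈ X ∧ (scomp G S).Adj v w} ⊆ {w | w ∈ X ∧ G.Adj v w} := by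
      rintro w ⟨hwX, -, hadj⟩
      rcases hadj with ⟨⟨hv, -⟩, -⟩ | ⟨-, hadj⟩
      · exact absurd hv hvS
      · exact ⟨hwX, hadj⟩
    have := (hdegv.trans (Set.ncard_le_ncard hsub (Set.toFinite _))).trans hleaf
    omega
  have hsub : {w | w ∈ X ∧ (scomp G S).Adj v w} ⊆ (S \ {v}) ∪ {w | w ∈ X ∧ G.Adj v w} := by
    rintro w ⟨hwX, hne, hadj⟩
    rcases hadj with ⟨⟨-, hw⟩, -⟩ | ⟨-, hadj⟩
    · exact Or.inl ⟨hw, fun h => hne (h.symm)⟩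
    · exact Or.inr ⟨hwX, hadj⟩
  have h1 : {w | w ∈ X ∧ (scomp G S).Adj v w}.ncard ≤
      (S \ {v}).ncard + {w | w ∈ X ∧ G.Adj v w}.ncard :=
    le_trans (Set.ncard_le_ncard hsub (Set.Finite.union (Set.toFinite _) (Set.toFinite _)))
      (Set.ncard_union_le _ _)
  have h2 : (S \ {v}).ncard + 1 = S.ncard := Set.ncard_diff_singleton_add_one hvS (Set.toFinite _)
  omega
end

section
/- Let k ≥ 2 and let G be a forest on a finite vertex type with at least 2k + 2 vertices that has no sibling set of size k. If S is an independent set of G with |S| = k + 1, then G ⊕ S has degeneracy exactly k. -/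
open SimpleGraph

/-- A sibling set of size `k`: an independent set of `k` vertices with a common neighbor. -/
def SiblingSet {V : Type*} (G : SimpleGraph V) (S : Set V) (k : ℕ) : Prop :=
  S.ncard = k ∧ IsIndep G S ∧ ∃ w : V, ∀ v ∈ S, G.Adj w v


lemma forest_exists_leaf {V : Type*} [Fintype V] {G : SimpleGraph V} (hG : G.IsAcyclic)
    (Y : Set V) (hY : Y.Nonempty) : ∃ v ∈ Y, {w | w ∈ Y ∧ G.Adj v w}.ncard ≤ 1 := by
  classical
  obtain ⟨v0, hv0⟩ := hY
  set P : ℕ → Prop := fun n => ∃ (u : V) (p : G.Walk v0 u), p.IsPath ∧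
    (∀ x ∈ p.support, x ∈ Y) ∧ p.length = n with hP
  have h0 : P 0 := ⟨v0, Walk.nil, Walk.IsPath.nil, by simp [hv0], rfl⟩
  have hbdd : ∀ n, P n → n ≤ Fintype.card V := by
    rintro n ⟨u, p, hp, -, rfl⟩; exact hp.length_lt.le
  set N := Nat.findGreatest P (Fintype.card V) with hN
  have hPN : P N := Nat.findGreatest_spec (Nat.zero_le _) h0
  obtain ⟨u, p, hp, hsupp, hlen⟩ := hPN
  have hmax : ∀ m, P m → m ≤ N := fun m hm => Nat.le_findGreatest (hbdd m hm) hm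
  refine ⟨u, hsupp _ p.end_mem_support, ?_⟩
  have hsub : {w | w ∈ Y ∧ G.Adj u w} ⊆ {p.reverse.getVert 1} := by
    rintro w ⟨hwY, hadj⟩
    by_cases hw : w ∈ p.support
    · -- w on the path: unique path from u to w is the single edge
      have hw' : w ∈ p.reverse.support := by rwa [Walk.support_reverse, List.mem_reverse]
      have hq : (p.reverse.takeUntil w hw').IsPath := hp.reverse.takeUntil hw'
      have he : (Walk.cons hadj Walk.nil : G.Walk u w).IsPath := by
        rw [Walk.cons_isPath_iff]; simp [hadj.ne]
      have := hG.path_unique ⟨p.reverse.takeUntil w hw', hq⟩ ⟨Walk.cons hadj Walk.nil, he⟩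
      have heq : p.reverse.takeUntil w hw' = Walk.cons hadj Walk.nil :=
        congrArg Subtype.val this
      have hspec := p.reverse.take_spec hw'
      rw [heq] at hspec
      simp only [Set.mem_singleton_iff]
      rw [← hspec]
      simp [Walk.getVert_cons_succ]
    · -- extend the path: contradiction with maximality
      exfalso
      have hw' : w ∉ p.reverse.support := by rwa [Walk.support_reverse, List.mem_reverse]
      have hpath : (Walk.cons hadj.symm p.reverse : G.Walk w v0).IsPath :=
        hp.reverse.cons hw'
      have hP' : P (N + 1) := by
        refine ⟨w, (Walk.cons hadj.symm p.reverse).reverse, hpath.reverse, ?_, ?_⟩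
        · intro x hx
          rw [Walk.support_reverse, List.mem_reverse, Walk.support_cons, List.mem_cons] at hx
          rcases hx with hx | hx
          · exact hx ▸ hwY
          · rw [Walk.support_reverse, List.mem_reverse] at hx; exact hsupp x hx
        · simp [hlen]
      exact Nat.not_succ_le_self N (hmax _ hP')
  calc {w | w ∈ Y ∧ G.Adj u w}.ncard ≤ ({p.reverse.getVert 1} : Set V).ncard :=
        Set.ncard_le_ncard hsub (Set.finite_singleton _)
    _ = 1 := Set.ncard_singleton _

theorem stmt14 {V : Type*} [Fintype V] (G : SimpleGraph V) (k : ℕ) (hk : 2 ≤ k)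
    (hforest : G.IsAcyclic)
    (hcard : 2 * k + 2 ≤ Fintype.card V)
    (hnosib : ¬ ∃ T : Set V, SiblingSet G T k)
    (S : Set V) (hindep : IsIndep G S) (hScard : S.ncard = k + 1) :
    DegeneracyExactly (scomp G S) k := by
  classical
  constructor
  · -- upper bound
    intro X hX
    by_contra hcon
    push_neg at hcon
    by_cases hXS : X ⊆ S
    · obtain ⟨v, hv⟩ := hX
      have h1 : {w | w ∈ X ∧ (scomp G S).Adj v w} ⊆ S \ {v} := by
        rintro w ⟨hwX, hadj⟩
        exact ⟨hXS hwX, fun h => hadj.1 (Set.mem_singleton_iff.mp h).symm⟩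
      have h2 : {w | w ∈ X ∧ (scomp G S).Adj v w}.ncard ≤ (S \ {v}).ncard :=
        Set.ncard_le_ncard h1 (Set.toFinite _)
      rw [Set.ncard_diff_singleton_of_mem (hXS hv), hScard] at h2
      exact absurd h2 (Nat.not_le.mpr (hcon v hv))
    · obtain ⟨v0, hv0X, hv0S⟩ := Set.not_subset.mp hXS
      obtain ⟨v, hvY, hleaf⟩ := forest_exists_leaf hforest (X \ S) ⟨v0, hv0X, hv0S⟩
      have hvX : v ∈ X := hvY.1
      have hvS : v ∉ S := hvY.2
      set A := {w | w ∈ X \ S ∧ G.Adj v w} with hA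
      set B := {w | w ∈ X ∩ S ∧ G.Adj v w} with hB
      have hDsub : {w | w ∈ X ∧ (scomp G S).Adj v w} ⊆ A ∪ B := by
        rintro w ⟨hwX, hne, hadj⟩
        rcases hadj with ⟨⟨hvS', _⟩, _⟩ | ⟨_, hadj⟩
        · exact absurd hvS' hvS
        · by_cases hwS : w ∈ S
          · exact Or.inr ⟨⟨hwX, hwS⟩, hadj⟩
          · exact Or.inl ⟨⟨hwX, hwS⟩, hadj⟩
      have hchain : {w | w ∈ X ∧ (scomp G S).Adj v w}.ncard ≤ 1 + B.ncard := by
        calc {w | w ∈ X ∧ (scomp G S).Adj v w}.ncard ≤ (A ∪ B).ncard :=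
              Set.ncard_le_ncard hDsub (Set.toFinite _)
          _ ≤ A.ncard + B.ncard := Set.ncard_union_le _ _
          _ ≤ 1 + B.ncard := by exact Nat.add_le_add_right hleaf _
      have hkB : k ≤ B.ncard := by
        have := hcon v hvX
        omega
      obtain ⟨T, hTB, hTcard⟩ := Set.exists_subset_card_eq hkB
      refine hnosib ⟨T, hTcard, ?_, v, fun x hx => (hTB hx).2⟩
      intro a ha b hb
      exact hindep (hTB ha).1.2 (hTB hb).1.2
  · -- lower bound: X = S is a clique in scomp
    refine ⟨S, Set.nonempty_of_ncard_ne_zero (by omega), ?_⟩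
    intro v hv
    have h1 : S \ {v} ⊆ {w | w ∈ S ∧ (scomp G S).Adj v w} := by
      rintro w ⟨hwS, hwv⟩
      refine ⟨hwS, fun h => hwv (Set.mem_singleton_iff.mpr h.symm),
        Or.inl ⟨⟨hv, hwS⟩, hindep hv hwS⟩⟩
    have h2 : (S \ {v}).ncard ≤ {w | w ∈ S ∧ (scomp G S).Adj v w}.ncard :=
      Set.ncard_le_ncard h1 (Set.toFinite _)
    rwa [Set.ncard_diff_singleton_of_mem hv, hScard,
      Nat.add_sub_cancel] at h2
end

section
/- Let k ≥ 2 and let G be a forest on a finite vertex type with at least 2k + 2 vertices that has no sibling set of size k. Then every set T of vertices such that G ⊕ T has degeneracy exactly k satisfies |T| ≥ k + 1. -/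
open SimpleGraph

lemma acyclic_no_triangle {V : Type*} {G : SimpleGraph V} (h : G.IsAcyclic)
    {u v w : V} (huv : G.Adj u v) (hvw : G.Adj v w) (hwu : G.Adj w u) : False := by
  exact h (.cons huv (.cons hvw (.cons hwu .nil))) (by
    constructor
    · constructor
      · simp [Walk.isTrail_def, Sym2.eq_iff, huv.ne, hvw.ne, hwu.ne, huv.ne', hvw.ne', hwu.ne']
      · simp
    · simp [huv.ne, hvw.ne, hwu.ne, huv.ne', hvw.ne', hwu.ne'])

theorem stmt15 {V : Type*} [Fintype V] (G : SimpleGraph V) (k : ℕ) (hk : 2 ≤ k)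
    (hforest : G.IsAcyclic)
    (hcard : 2 * k + 2 ≤ Fintype.card V)
    (hnosib : ¬ ∃ T : Set V, SiblingSet G T k) :
    ∀ T : Set V, DegeneracyExactly (scomp G T) k → k + 1 ≤ T.ncard := by
  intro T hdeg
  by_contra hT
  push_neg at hT
  have hTk : T.ncard ≤ k := by omega
  obtain ⟨X, hXne, hXmin⟩ := hdeg.2
  -- X is not contained in T
  have hnotsub : ¬ X ⊆ T := by
    intro hsub
    obtain ⟨v, hv⟩ := hXne
    have hk1 : k ≤ {w | w ∈ X ∧ (scomp G T).Adj v w}.ncard := hXmin v hv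
    have hsub2 : {w | w ∈ X ∧ (scomp G T).Adj v w} ⊆ T \ {v} := by
      rintro w ⟨hwX, hadj⟩
      exact ⟨hsub hwX, fun h => hadj.1 (by simpa using h.symm)⟩
    have h1 : {w | w ∈ X ∧ (scomp G T).Adj v w}.ncard ≤ (T \ {v}).ncard :=
      Set.ncard_le_ncard hsub2 (Set.toFinite _)
    have h2 : (T \ {v}).ncard < T.ncard :=
      Set.ncard_diff_singleton_lt_of_mem (hsub hv) (Set.toFinite _)
    omega
  obtain ⟨v, hvX, hvT⟩ := Set.not_subset.mp hnotsub
  -- v's neighbors in H within X are exactly its G-neighbors in X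
  have hset : {w | w ∈ X ∧ (scomp G T).Adj v w} = {w | w ∈ X ∧ G.Adj v w} := by
    ext w
    simp only [Set.mem_setOf_eq, and_congr_right_iff]
    intro _
    constructor
    · rintro ⟨hne, ⟨⟨hv', _⟩, _⟩ | ⟨_, hadj⟩⟩
      · exact absurd hv' hvT
      · exact hadj
    · intro hadj
      exact ⟨hadj.ne, Or.inr ⟨fun h => hvT h.1, hadj⟩⟩
  have hkN : k ≤ {w | w ∈ X ∧ G.Adj v w}.ncard := by
    rw [← hset]; exact hXmin v hvX
  obtain ⟨S, hSsub, hScard⟩ := Set.exists_subset_card_eq hkN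
  refine hnosib ⟨S, hScard, ?_, v, fun u hu => (hSsub hu).2⟩
  intro a ha b hb hab
  have hva := (hSsub ha).2
  have hvb := (hSsub hb).2
  exact acyclic_no_triangle hforest hva hab hvb.symm
end

section
/- Let G be a connected simple graph on a finite nonempty vertex type, and let S be a set of vertices such that G ⊕ S is disconnected (not connected). Then S intersects every connected component of G ⊕ S; that is, for every vertex v there exists s ∈ S such that v and s are joined by a walk in G ⊕ S. -/
open SimpleGraph

theorem stmt17 {V : Type*} [Fintype V] [Nonempty V] (G : SimpleGraph V)
    (hconn : G.Connected)
    (S : Set V) (hdisc : ¬ (scomp G S).Connected) :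
    ∀ v : V, ∃ s ∈ S, (scomp G S).Reachable v s := by
  intro v
  by_contra h
  push_neg at h
  apply hdisc
  have step : ∀ a b, G.Walk a b → (scomp G S).Reachable v a →
      (scomp G S).Reachable v b := by
    intro a b p
    induction p with
    | nil => exact id
    | cons hadj p ih =>
      rename_i x y _
      intro hva
      apply ih
      refine hva.trans (SimpleGraph.Adj.reachable ?_)
      refine ⟨hadj.ne, Or.inr ⟨?_, hadj⟩⟩
      rintro ⟨hxS, _⟩
      exact h _ hxS hva
  refine ⟨?_⟩
  intro a b
  have hva := step v a (hconn v a).some (SimpleGraph.Reachable.refl v)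
  have hvb := step v b (hconn v b).some (SimpleGraph.Reachable.refl v)
  exact hva.symm.trans hvb
end
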